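/- Let Z : (Fin N → ℝ) → ℂ be the diagonal-source partition function Z(j) = exp(−iV Σ_k j_k E_k/λ) · A(z − (V/ν)·j) · W(t⁰ + j). Then for each a ∈ Fin N the 1-point function G_{|a|} := (1/(iV)) · (∂Z/∂j_a)(0)/Z(0) equals −E_a/λ − (λ/(iV)) · Σ_{i≠a} 1/(E_a² − E_i²) − (1/(iν)) · (∂_a A)(z)/A(z), where ∂_a denotes the partial derivative in the a-th coordinate. -/

import Mathlib

set_option maxHeartbeats 1000000


noncomputable section

open Finset

/-- Partial derivative of `F` in the `k`-th coordinate. -/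
def pd {N : ℕ} (k : Fin N) (F : (Fin N → ℝ) → ℂ) : (Fin N → ℝ) → ℂ :=
  fun x => fderiv ℝ F x (Pi.single k 1)

/-- `W(t) = 1 / ∏_{l<j} (t_j − t_l)`. -/
def Wfun {N : ℕ} (t : Fin N → ℝ) : ℂ :=
  ((∏ q ∈ Finset.univ.filter (fun q : Fin N × Fin N => q.1 < q.2),
      (t q.2 - t q.1) : ℝ) : ℂ)⁻¹

lemma alg_key (I V ν lam B P D Sc Ea : ℂ) (hI : I ≠ 0) (hV : V ≠ 0) (hν : ν ≠ 0)
    (hlam : lam ≠ 0) (hB : B ≠ 0) (hP : P ≠ 0) :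
    (I*V)⁻¹ * (B * (-(P^2)⁻¹ * (P * (lam * Sc))) + P⁻¹ * (-(V/ν) * D + B * (-I*V*(Ea/lam)))) / (B*P⁻¹)
    = -Ea/lam - lam/(I*V) * Sc - (I*ν)⁻¹ * D / B := by
  field_simp [hI, hV, hν, hlam, hB, hP]
  ring

lemma pair_sum {N : ℕ} (a : Fin N) (u : Fin N → ℝ) :
    ∑ q ∈ Finset.univ.filter (fun q : Fin N × Fin N => q.1 < q.2),
      ((Pi.single a 1 : Fin N → ℝ) q.2 - (Pi.single a 1 : Fin N → ℝ) q.1) * (u q.2 - u q.1)⁻¹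
    = ∑ i ∈ Finset.univ.filter (fun i => i ≠ a), (u a - u i)⁻¹ := by
  rw [Finset.sum_filter, Finset.sum_filter, Fintype.sum_prod_type]
  have step : ∀ x y : Fin N,
      (if x < y then ((Pi.single a 1 : Fin N → ℝ) y - (Pi.single a 1 : Fin N → ℝ) x) * (u y - u x)⁻¹ else 0)
      = (if y = a then (if x < a then (u a - u x)⁻¹ else 0) else 0)
        + (if x = a then (if a < y then -(u y - u a)⁻¹ else 0) else 0) := by
    intro x y
    by_cases h1 : x = a <;> by_cases h2 : y = a <;>
      simp [Pi.single_apply, h1, h2]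
  simp only [step, Finset.sum_add_distrib]
  rw [Finset.sum_comm (f := fun x y => if x = a then (if a < y then -(u y - u a)⁻¹ else 0) else 0)]
  simp only [Finset.sum_ite_eq', Finset.mem_univ, if_true]
  rw [← Finset.sum_add_distrib]
  apply Finset.sum_congr rfl
  intro i _
  rcases lt_trichotomy i a with h | h | h
  · simp [h, h.ne, not_lt.2 h.le, h.ne']
  · simp [h]
  · have e : u a - u i = -(u i - u a) := by ring
    rw [if_neg (not_lt.2 h.le), if_pos h, if_pos h.ne', e, inv_neg]
    ring

/-- **The 1-point function `G_{|a|}` of the `Φ³₂` matrix model.**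
With `Z(j) = exp(−iV Σ_k j_k E_k/λ) · A(z − (V/ν)·j) · W(t⁰ + j)`, for each `a`,
`G_{|a|} = (1/(iV)) (∂Z/∂j_a)(0)/Z(0)
  = −E_a/λ − (λ/(iV)) Σ_{i≠a} 1/(E_a²−E_i²) − (1/(iν)) (∂_a A)(z)/A(z)`. -/
theorem one_point_function {N : ℕ} (lam V κ ν : ℝ)
    (hlam : lam ≠ 0) (hV : V ≠ 0) (hκ : κ ≠ 0) (hν : ν ^ 3 = lam * V)
    (E : Fin N → ℝ) (hE : ∀ i j, i ≠ j → E i ^ 2 ≠ E j ^ 2)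
    (z t0 : Fin N → ℝ)
    (hz : ∀ k, z k = -V * E k ^ 2 / (ν * lam) + V * κ / ν)
    (ht0 : ∀ k, t0 k = E k ^ 2 / lam)
    (A : (Fin N → ℝ) → ℂ) (hA : ContDiff ℝ 1 A) (hAz : A z ≠ 0)
    (Z : (Fin N → ℝ) → ℂ)
    (hZ : ∀ j : Fin N → ℝ, Z j =
      Complex.exp (-Complex.I * (V : ℂ) * ((∑ k, j k * E k / lam : ℝ) : ℂ)) *
        A (fun k => z k - (V / ν) * j k) * Wfun (fun k => t0 k + j k))
    (a : Fin N) :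
    1 / (Complex.I * (V : ℂ)) * pd a Z 0 / Z 0 =
      -(E a : ℂ) / (lam : ℂ) -
        (lam : ℂ) / (Complex.I * (V : ℂ)) *
          ∑ i ∈ Finset.univ.filter (fun i => i ≠ a),
            1 / ((E a ^ 2 - E i ^ 2 : ℝ) : ℂ) -
        1 / (Complex.I * (ν : ℂ)) * pd a A z / A z := by
  classical
  have hν0 : ν ≠ 0 := by
    intro h
    apply mul_ne_zero hlam hV
    rw [← hν, h]; ring
  set S : Finset (Fin N × Fin N) :=
    Finset.univ.filter (fun q : Fin N × Fin N => q.1 < q.2) with hS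
  set f : Fin N × Fin N → (Fin N → ℝ) → ℝ :=
    fun q j => t0 q.2 + j q.2 - (t0 q.1 + j q.1) with hf_def
  set f' : Fin N × Fin N → ((Fin N → ℝ) →L[ℝ] ℝ) :=
    fun q => (ContinuousLinearMap.proj (R := ℝ) (φ := fun _ : Fin N => ℝ) q.2) - (ContinuousLinearMap.proj (R := ℝ) (φ := fun _ : Fin N => ℝ) q.1) with hf'_def
  have hf : ∀ q ∈ S, HasFDerivAt (f q) (f' q) 0 := by
    intro q _
    have hfe : f q = fun j => (t0 q.2 - t0 q.1) + (f' q) j := by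
      funext j; simp [hf_def, hf'_def]; ring
    rw [hfe]
    exact ((f' q).hasFDerivAt).const_add _
  have hP : HasFDerivAt (fun j => ∏ q ∈ S, f q j)
      (∑ q ∈ S, (∏ r ∈ S.erase q, f r 0) • f' q) 0 :=
    HasFDerivAt.finset_prod hf
  set P0 : ℝ := ∏ q ∈ S, f q 0 with hP0def
  have hfq0 : ∀ q : Fin N × Fin N, f q 0 = t0 q.2 - t0 q.1 := fun q => by simp [hf_def]
  have ht0ne : ∀ i j : Fin N, i ≠ j → t0 i ≠ t0 j := by
    intro i j hij h
    rw [ht0, ht0] at h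
    exact hE i j hij (by field_simp at h; exact h)
  have hP0 : P0 ≠ 0 := by
    rw [hP0def]
    refine Finset.prod_ne_zero_iff.2 (fun q hq => ?_)
    rw [hfq0]
    have hlt : q.1 < q.2 := by simpa [hS] using hq
    exact sub_ne_zero.2 (ht0ne _ _ hlt.ne')
  have hP0c : ((P0 : ℝ) : ℂ) ≠ 0 := by exact_mod_cast hP0
  -- complexified product
  have hPc : HasFDerivAt (fun j => ((∏ q ∈ S, f q j : ℝ) : ℂ))
      (Complex.ofRealCLM.comp (∑ q ∈ S, (∏ r ∈ S.erase q, f r 0) • f' q)) 0 :=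
    Complex.ofRealCLM.hasFDerivAt.comp 0 hP
  -- W-part
  have hWeq : (fun j : Fin N → ℝ => Wfun (fun k => t0 k + j k))
      = fun j => ((∏ q ∈ S, f q j : ℝ) : ℂ)⁻¹ := by
    funext j; simp [Wfun, hS, hf_def]
  have hW : HasFDerivAt (fun j : Fin N → ℝ => Wfun (fun k => t0 k + j k))
      ((-((P0 : ℂ) ^ 2)⁻¹) • (Complex.ofRealCLM.comp
        (∑ q ∈ S, (∏ r ∈ S.erase q, f r 0) • f' q))) 0 := by
    rw [hWeq]
    exact HasDerivAt.comp_hasFDerivAt_of_eq 0 (hasDerivAt_inv hP0c) hPc (by rw [hP0def])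
  -- exp part
  set L1 : (Fin N → ℝ) →L[ℝ] ℝ := ∑ k, (E k / lam) • (ContinuousLinearMap.proj (R := ℝ) (φ := fun _ : Fin N => ℝ) k) with hL1
  have hL1app : ∀ j : Fin N → ℝ, L1 j = ∑ k, j k * E k / lam := by
    intro j
    simp [hL1, ContinuousLinearMap.sum_apply]
    exact Finset.sum_congr rfl fun k _ => by ring
  have hexp : HasFDerivAt
      (fun j : Fin N → ℝ => Complex.exp (-Complex.I * (V : ℂ) * ((∑ k, j k * E k / lam : ℝ) : ℂ)))
      ((-Complex.I * (V : ℂ)) • (Complex.ofRealCLM.comp L1)) 0 := by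
    have h0 : HasFDerivAt (fun j : Fin N → ℝ => ((∑ k, j k * E k / lam : ℝ) : ℂ))
        (Complex.ofRealCLM.comp L1) 0 := by
      have he : (fun j : Fin N → ℝ => ((∑ k, j k * E k / lam : ℝ) : ℂ))
          = fun j => Complex.ofRealCLM.comp L1 j := by
        funext j; simp [hL1app]
      rw [he]
      exact (Complex.ofRealCLM.comp L1).hasFDerivAt
    have hlin := h0.const_mul (-Complex.I * (V : ℂ))
    have := hlin.cexp
    simpa using this
  -- A ∘ g part
  set G' : (Fin N → ℝ) →L[ℝ] (Fin N → ℝ) :=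
    (-(V/ν)) • ContinuousLinearMap.id ℝ (Fin N → ℝ) with hG'
  have hAg : HasFDerivAt (fun j : Fin N → ℝ => A (fun k => z k - (V/ν) * j k))
      ((fderiv ℝ A z).comp G') 0 := by
    have hgd : HasFDerivAt (fun j : Fin N → ℝ => (fun k => z k - (V/ν) * j k)) G' 0 := by
      have he : (fun j : Fin N → ℝ => (fun k => z k - (V/ν) * j k))
          = fun j => z + (-(V/ν)) • j := by
        funext j k; simp [Pi.smul_apply]; ring
      rw [he, hG']
      exact ((hasFDerivAt_id (0 : Fin N → ℝ)).const_smul (-(V/ν))).const_add z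
    have hAd : HasFDerivAt A (fderiv ℝ A z) (fun k => z k - (V/ν) * (0 : Fin N → ℝ) k) := by
      have : (fun k => z k - (V/ν) * (0 : Fin N → ℝ) k) = z := by funext k; simp
      rw [this]
      exact (hA.differentiable one_ne_zero z).hasFDerivAt
    exact hAd.comp 0 hgd
  -- total
  have hZfun : Z = fun j =>
      Complex.exp (-Complex.I * (V : ℂ) * ((∑ k, j k * E k / lam : ℝ) : ℂ)) *
        A (fun k => z k - (V / ν) * j k) * Wfun (fun k => t0 k + j k) := funext hZ
  have hZd := (hexp.mul hAg).mul hW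
  simp only [Pi.mul_def] at hZd
  rw [← hZfun] at hZd
  -- evaluations at 0
  have hg0 : (fun k => z k - (V/ν) * (0:Fin N→ℝ) k) = z := by funext k; simp
  have ht00 : (fun k => t0 k + (0:Fin N→ℝ) k) = t0 := by funext k; simp
  have hP0t : P0 = ∏ q ∈ S, (t0 q.2 - t0 q.1) := Finset.prod_congr rfl fun q _ => hfq0 q
  have hW0 : Wfun t0 = ((P0 : ℝ):ℂ)⁻¹ := by rw [Wfun, hP0t]
  have hZ0 : Z 0 = A z * ((P0:ℝ):ℂ)⁻¹ := by
    rw [hZ 0, hg0, ht00, hW0]; simp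
  have hL1e : L1 (Pi.single a 1) = E a / lam := by
    rw [hL1app]
    simp [Pi.single_apply, ite_mul, zero_mul, Finset.sum_ite_eq', div_eq_mul_inv]
  simp only [pd]
  rw [hZd.fderiv, hZ0]
  simp only [ContinuousLinearMap.add_apply, ContinuousLinearMap.smul_apply,
    ContinuousLinearMap.comp_apply, ContinuousLinearMap.sum_apply,
    ContinuousLinearMap.coe_smul', Pi.smul_apply, ContinuousLinearMap.sub_apply,
    ContinuousLinearMap.proj_apply, Complex.ofRealCLM_apply, map_smul, map_sum,
    hL1e]
  rw [hg0, ht00, hW0]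
  have hexp0 : Complex.exp (-Complex.I * (V:ℂ) * ((∑ k : Fin N, (0:Fin N→ℝ) k * E k / lam : ℝ):ℂ)) = 1 := by
    norm_num
  rw [hexp0]
  have hG'e : G' (Pi.single a 1) = (-(V/ν)) • (Pi.single a 1 : Fin N → ℝ) := by
    simp [hG']
  rw [hG'e, (fderiv ℝ A z).map_smul]
  have hf'e : ∀ x : Fin N × Fin N, (f' x) (Pi.single a 1)
      = (Pi.single a 1 : Fin N → ℝ) x.2 - (Pi.single a 1 : Fin N → ℝ) x.1 := fun x => by
    simp [hf'_def]
  simp only [hf'e]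
  set Pe : ℝ := ∑ q ∈ S, (∏ r ∈ S.erase q, f r 0) *
      ((Pi.single a 1 : Fin N → ℝ) q.2 - (Pi.single a 1 : Fin N → ℝ) q.1) with hPedef
  have hsum : (∑ x ∈ S, (∏ r ∈ S.erase x, f r 0) •
      ((((Pi.single a 1 : Fin N → ℝ) x.2 - (Pi.single a 1 : Fin N → ℝ) x.1 : ℝ)) : ℂ))
      = ((Pe : ℝ) : ℂ) := by
    rw [hPedef]
    push_cast [Complex.real_smul]
    rfl
  rw [hsum]
  have hkey : Pe = P0 * ∑ i ∈ Finset.univ.filter (fun i => i ≠ a),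
      lam * (E a ^ 2 - E i ^ 2)⁻¹ := by
    have h1 : ∀ q ∈ S, (∏ r ∈ S.erase q, f r 0) = P0 * (f q 0)⁻¹ := by
      intro q hq
      have h2 := Finset.prod_erase_mul S (fun r => f r 0) hq
      have hlt : q.1 < q.2 := by simpa [hS] using hq
      have hne : f q 0 ≠ 0 := by
        rw [hfq0]; exact sub_ne_zero.2 (ht0ne _ _ hlt.ne')
      rw [← div_eq_mul_inv, eq_div_iff hne]
      exact h2
    have h3 : Pe = P0 * ∑ q ∈ S,
        ((Pi.single a 1 : Fin N → ℝ) q.2 - (Pi.single a 1 : Fin N → ℝ) q.1) * (t0 q.2 - t0 q.1)⁻¹ := by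
      rw [hPedef, Finset.mul_sum]
      refine Finset.sum_congr rfl fun q hq => ?_
      rw [h1 q hq, hfq0]
      ring
    rw [h3, hS]
    rw [pair_sum a t0]
    congr 1
    refine Finset.sum_congr rfl fun i _ => ?_
    rw [ht0, ht0, div_sub_div_same, inv_div, div_eq_mul_inv]
  have hkeyC : ((Pe : ℝ) : ℂ) = ((P0 : ℝ) : ℂ) *
      ((lam : ℂ) * ∑ i ∈ Finset.univ.filter (fun i => i ≠ a),
        (((E a ^ 2 - E i ^ 2 : ℝ) : ℂ))⁻¹) := by
    rw [hkey]
    push_cast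
    simp [Finset.mul_sum, mul_assoc]
  rw [hkeyC]
  have hVc : (V : ℂ) ≠ 0 := Complex.ofReal_ne_zero.2 hV
  have hνc : (ν : ℂ) ≠ 0 := Complex.ofReal_ne_zero.2 hν0
  have hlamc : (lam : ℂ) ≠ 0 := Complex.ofReal_ne_zero.2 hlam
  simp only [smul_eq_mul, Complex.real_smul, one_mul, one_div]
  push_cast
  exact alg_key Complex.I _ _ _ _ _ _ _ _ Complex.I_ne_zero hVc hνc hlamc hAz hP0c
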